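/- The Lambropoulou function X satisfies the HOMFLYPT skein relation: if F″ is a field extension of F′ containing also an element √q with (√q)^2 = q, then for all n, all 1 ≤ i ≤ n−1, and all α, β ∈ B_{1,n}, (1/(√q √λ)) · X(α σ_i β) − (√q √λ) · X(α σ_i^{−1} β) = (√q − 1/√q) · X(α β). -/

import Mathlib

set_option synthInstance.maxHeartbeats 1000000
set_option maxHeartbeats 2000000

namespace MB

/-! ## The mixed braid group `B_{1,n}` (with `m = n - 1` braiding generators) -/

/-- Generators: `none` is the looping generator `t`, `some i` is `σ_{i+1}` for `i : Fin m`. -/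
abbrev MBGen (m : ℕ) := Option (Fin m)

/-- The relators of the mixed braid group `B_{1,n}` (`m = n-1`):
`σ₁tσ₁t = tσ₁tσ₁`; `tσ_i = σ_i t` for `i > 1`; the braid relations among the `σ_i`. -/
def rels (m : ℕ) : Set (FreeGroup (MBGen m)) :=
  { r | (∃ h : 0 < m,
          r = (FreeGroup.of (some ⟨0, h⟩) * FreeGroup.of none) ^ 2 *
              ((FreeGroup.of (none : MBGen m) * FreeGroup.of (some ⟨0, h⟩)) ^ 2)⁻¹) ∨
        (∃ i : Fin m, 1 ≤ (i : ℕ) ∧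
          r = FreeGroup.of (none : MBGen m) * FreeGroup.of (some i) *
              (FreeGroup.of (some i) * FreeGroup.of (none : MBGen m))⁻¹) ∨
        (∃ i j : Fin m, (i : ℕ) + 1 = (j : ℕ) ∧
          r = FreeGroup.of (some i) * FreeGroup.of (some j) * FreeGroup.of (some i) *
              (FreeGroup.of (some j) * FreeGroup.of (some i) * FreeGroup.of (some j))⁻¹) ∨
        (∃ i j : Fin m, (i : ℕ) + 1 < (j : ℕ) ∧
          r = FreeGroup.of (some i) * FreeGroup.of (some j) *
              (FreeGroup.of (some j) * FreeGroup.of (some i))⁻¹) }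

/-- The mixed braid group `B_{1,n}` with `n = m+1` moving strands. -/
abbrev B (m : ℕ) := PresentedGroup (rels m)

/-- The braiding generator `σ_{i+1}`, for `i : Fin m`. -/
def σ {m : ℕ} (i : Fin m) : B m := PresentedGroup.of (some i)

/-- The looping generator `t`. -/
def τ {m : ℕ} : B m := PresentedGroup.of none

/-- `σ_j` in one-based indexing (`1 ≤ j ≤ m`), junk value `1` out of range. -/
def sig {m : ℕ} (j : ℕ) : B m :=
  if h : 1 ≤ j ∧ j - 1 < m then σ ⟨j - 1, h.2⟩ else 1

/-- The looping elements `t_i = σ_i ⋯ σ_1 t σ_1 ⋯ σ_i` (for `0 ≤ i ≤ m`), via `t_0 = t`,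
`t_{j+1} = σ_{j+1} t_j σ_{j+1}`. -/
def tt {m : ℕ} : ℕ → B m
  | 0 => τ
  | (j+1) => sig (j+1) * tt j * sig (j+1)

/-- The looping elements `t′_i = σ_i ⋯ σ_1 t σ_1⁻¹ ⋯ σ_i⁻¹` (for `0 ≤ i ≤ m`), via `t′_0 = t`,
`t′_{j+1} = σ_{j+1} t′_j σ_{j+1}⁻¹`. -/
def tp {m : ℕ} : ℕ → B m
  | 0 => τ
  | (j+1) => sig (j+1) * tp j * (sig (j+1))⁻¹

/-! ## The generalized Iwahori–Hecke algebra of type B, `H_{1,n}(q)` -/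

/-- The ground ring `R = ℂ[q^{±1}]` of Laurent polynomials. -/
abbrev R : Type := LaurentPolynomial ℂ

instance : IsDomain R := NoZeroDivisors.to_isDomain _

/-- The variable `q ∈ R`. -/
noncomputable def qq : R := LaurentPolynomial.T 1

/-- The quadratic Hecke relations `σ_i² = (q-1)σ_i + q`. -/
inductive heckeRel (m : ℕ) :
    MonoidAlgebra R (B m) → MonoidAlgebra R (B m) → Prop
  | quad (i : Fin m) : heckeRel m
      (MonoidAlgebra.of R (B m) (σ i) * MonoidAlgebra.of R (B m) (σ i))
      ((qq - 1) • MonoidAlgebra.of R (B m) (σ i) + qq • (1 : MonoidAlgebra R (B m)))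

/-- The generalized Iwahori–Hecke algebra of type B, `H_{1,n}(q)` (`n = m+1`), as the quotient
of the group algebra `R[B_{1,n}]` by the two-sided ideal generated by the quadratic relations. -/
abbrev H (m : ℕ) := RingQuot (heckeRel m)

/-- The canonical multiplicative map `π : B_{1,n} → H_{1,n}(q)`. -/
noncomputable def pih (m : ℕ) : B m →* H m :=
  (RingQuot.mkRingHom (heckeRel m)).toMonoidHom.comp (MonoidAlgebra.of R (B m))

/-- The subalgebra `H_n(q)` of `H_{1,n}(q)` generated by the images `g_1, …, g_{n-1}`
of `σ_1, …, σ_{n-1}`. -/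
noncomputable def HA (m : ℕ) : Subalgebra R (H m) :=
  Algebra.adjoin R (Set.range fun i : Fin m => pih m (σ i))

/-! ## The trace field `F` -/

/-- Polynomials over `R` in the variables `z` (= `X none`) and `s_k`, `k ∈ ℤ` (= `X (some k)`). -/
abbrev P : Type := MvPolynomial (Option ℤ) R

/-- The field of fractions `F` of `P`. -/
abbrev F : Type := FractionRing P

/-- The variable `z ∈ F`. -/
noncomputable def zF : F := algebraMap P F (MvPolynomial.X none)

/-- The variable `s_k ∈ F`, for `k ∈ ℤ`. -/
noncomputable def sF (k : ℤ) : F := algebraMap P F (MvPolynomial.X (some k))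

/-- The image of `q` in `F`. -/
noncomputable def qF : F := algebraMap R F qq

/-! ## The natural inclusions and the Markov trace -/

/-- `ι : B_{1,n} → B_{1,n+1}` is the natural inclusion: it sends `t ↦ t` and `σ_i ↦ σ_i`. -/
def IsGrpIncl {m : ℕ} (ι : B m →* B (m+1)) : Prop :=
  ι τ = τ ∧ ∀ i : Fin m, ι (σ i) = σ i.castSucc

/-- `f : H_{1,n}(q) → H_{1,n+1}(q)` is the natural inclusion: it is induced by the natural
inclusion `B_{1,n} → B_{1,n+1}`. -/
def IsInclusion {m : ℕ} (f : H m →ₐ[R] H (m+1)) : Prop :=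
  ∃ ι : B m →* B (m+1), IsGrpIncl ι ∧ ∀ x : B m, f (pih m x) = pih (m+1) (ι x)

/-- The Markov trace rules for a family of `R`-linear maps `tr : H_{1,n}(q) → F`:
compatibility with the natural inclusions, `tr(ab) = tr(ba)`, `tr(1) = 1`,
`tr(a g_n) = z·tr(a)` and `tr(a (t′_n)^k) = s_k·tr(a)`. -/
structure IsMarkovTrace (tr : ∀ m, H m →ₗ[R] F) : Prop where
  compat : ∀ (m : ℕ) (f : H m →ₐ[R] H (m+1)), IsInclusion f →
    ∀ a : H m, tr (m+1) (f a) = tr m a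
  trace_comm : ∀ (m : ℕ) (a b : H m), tr m (a * b) = tr m (b * a)
  trace_one : ∀ m : ℕ, tr m 1 = 1
  markov : ∀ (m : ℕ) (f : H m →ₐ[R] H (m+1)), IsInclusion f → ∀ a : H m,
    tr (m+1) (f a * pih (m+1) (σ (Fin.last m))) = zF * tr m a
  loop_rule : ∀ (m : ℕ) (f : H m →ₐ[R] H (m+1)), IsInclusion f → ∀ (a : H m) (k : ℤ),
    tr (m+1) (f a * pih (m+1) (tp (m+1) ^ k)) = sF k * tr m a

/-! ## The Lambropoulou invariant `X` -/

/-- `λ = (z + 1 − q)/(qz) ∈ F`. -/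
noncomputable def lamF : F := (zF + 1 - qF) / (qF * zF)

/-- A family of exponent-sum homomorphisms `e : B_{1,n} → ℤ`, sending each `σ_i` to `1`
and `t` to `0` (written multiplicatively). -/
def IsExpSum (e : ∀ m, B m →* Multiplicative ℤ) : Prop :=
  ∀ m : ℕ, e m τ = 1 ∧ ∀ i : Fin m, e m (σ i) = Multiplicative.ofAdd 1

/-- The Lambropoulou function
`X(α) = ( −(1−λq)/(√λ(1−q)) )^{n−1} · (√λ)^{e(α)} · tr(π(α))`, for `α ∈ B_{1,n}`, `n = m+1`;
here `φ : F → F'` is the inclusion into a field containing a square root `sl` of `λ`. -/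
noncomputable def Xinv (tr : ∀ m, H m →ₗ[R] F) {F' : Type} [Field F'] (φ : F →+* F')
    (sl : F') (e : ∀ m, B m →* Multiplicative ℤ) (m : ℕ) (α : B m) : F' :=
  (-(1 - φ lamF * φ qF) / (sl * (1 - φ qF))) ^ m * sl ^ (Multiplicative.toAdd (e m α)) *
    φ (tr m (pih m α))

-- FRAGMENT: lemmas to insert
noncomputable def qi : R := LaurentPolynomial.T (-1)

lemma qq_mul_qi : qq * qi = 1 := by
  rw [qq, qi, ← LaurentPolynomial.T_add]; norm_num

lemma mk_eq {m : ℕ} (a : MonoidAlgebra R (B m)) :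
    RingQuot.mkRingHom (heckeRel m) a = RingQuot.mkAlgHom R (heckeRel m) a :=
  (RingHom.congr_fun (RingQuot.mkAlgHom_coe R (heckeRel m)) a).symm

lemma pih_eq {m : ℕ} (x : B m) :
    pih m x = RingQuot.mkAlgHom R (heckeRel m) (MonoidAlgebra.of R (B m) x) :=
  mk_eq _

lemma hecke_quad {m : ℕ} (i : Fin m) :
    pih m (σ i) * pih m (σ i) =
      (qq - 1) • pih m (σ i) + qq • (1 : H m) := by
  have h := RingQuot.mkRingHom_rel (heckeRel.quad (m := m) i)
  rw [mk_eq, mk_eq, map_mul, map_add, map_smul, map_smul, map_one] at h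
  rw [pih_eq]
  exact h

lemma key_identity {S : Type} [Ring S] (g c d : S) (hcom : g * c = c * g)
    (hquad : g * g = (d - 1) * g + d) (hciq : c * d = 1) :
    g * (c * g + (c - 1)) = 1 := by
  calc g * (c * g + (c - 1)) = (g * c) * g + g * c - g := by noncomm_ring
    _ = (c * g) * g + c * g - g := by rw [hcom]
    _ = c * (g * g) + c * g - g := by noncomm_ring
    _ = c * ((d - 1) * g + d) + c * g - g := by rw [hquad]
    _ = ((c * d) * g - c * g + c * d) + c * g - g := by noncomm_ring
    _ = (1 * g - c * g + 1) + c * g - g := by rw [hciq]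
    _ = 1 := by noncomm_ring

lemma hecke_inv {m : ℕ} (i : Fin m) :
    pih m ((σ i)⁻¹) =
      algebraMap R (H m) qi * pih m (σ i) + (algebraMap R (H m) qi - 1) := by
  set g := pih m (σ i) with hg
  set c := algebraMap R (H m) qi with hc
  set d := algebraMap R (H m) qq with hd
  have hcom : g * c = c * g := (Algebra.commutes qi g).symm
  have hquad : g * g = (d - 1) * g + d := by
    have := hecke_quad i
    rw [Algebra.smul_def, Algebra.smul_def, map_sub, map_one, mul_one] at this
    exact this
  have hciq : c * d = 1 := by
    rw [hc, hd, ← map_mul, mul_comm, qq_mul_qi, map_one]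
  have hginv : g * (c * g + (c - 1)) = 1 :=
    key_identity g c d hcom hquad hciq
  have h1 : pih m ((σ i)⁻¹) * g = 1 := by
    rw [hg, ← map_mul, inv_mul_cancel, map_one]
  calc pih m ((σ i)⁻¹) = pih m ((σ i)⁻¹) * (g * (c * g + (c - 1))) := by rw [hginv, mul_one]
    _ = (pih m ((σ i)⁻¹) * g) * (c * g + (c - 1)) := by rw [mul_assoc]
    _ = c * g + (c - 1) := by rw [h1, one_mul]

lemma key_expand {S : Type} [Ring S] (a b g c : S) (hca : a * c = c * a) :
    a * (c * g + (c - 1)) * b = c * (a * g * b) + (c * (a * b) - a * b) := by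
  calc a * (c * g + (c - 1)) * b = (a * c) * (g * b) + ((a * c) * b - a * b) := by noncomm_ring
    _ = (c * a) * (g * b) + ((c * a) * b - a * b) := by rw [hca]
    _ = _ := by noncomm_ring

lemma pih_expand {m : ℕ} (i : Fin m) (α β : B m) :
    pih m (α * (σ i)⁻¹ * β) =
      qi • pih m (α * σ i * β) + (qi • pih m (α * β) - pih m (α * β)) := by
  simp only [map_mul, hecke_inv, Algebra.smul_def]
  exact key_expand (pih m α) (pih m β) (pih m (σ i)) (algebraMap R (H m) qi)
    (Algebra.commutes qi (pih m α)).symm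

lemma trace_expand (tr : ∀ m, H m →ₗ[R] F) {F' : Type} [Field F'] (φ : F →+* F')
    {m : ℕ} (i : Fin m) (α β : B m) :
    φ (tr m (pih m (α * (σ i)⁻¹ * β))) =
      φ (algebraMap R F qi) * φ (tr m (pih m (α * σ i * β))) +
      (φ (algebraMap R F qi) - 1) * φ (tr m (pih m (α * β))) := by
  rw [pih_expand, map_add (tr m), map_sub (tr m), map_smul (tr m), map_smul (tr m),
    map_add φ, map_sub φ,
    Algebra.smul_def qi (tr m (pih m (α * σ i * β))),
    Algebra.smul_def qi (tr m (pih m (α * β))), map_mul φ, map_mul φ]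
  ring

lemma qF_mul : qF * algebraMap R F qi = 1 := by
  rw [qF, ← map_mul, qq_mul_qi, map_one]

lemma qF_ne : qF ≠ 0 := left_ne_zero_of_mul_eq_one qF_mul

lemma algR_eq (r : R) : algebraMap R F r = algebraMap P F (MvPolynomial.C r) :=
  IsScalarTower.algebraMap_apply R P F r

lemma zF_ne : zF ≠ 0 := by
  rw [zF]
  intro h
  exact MvPolynomial.X_ne_zero none (IsFractionRing.injective P F (by rw [h, map_zero]))

lemma num_ne : zF + 1 - qF ≠ 0 := by
  have h1 : zF + 1 - qF = algebraMap P F (MvPolynomial.X none + MvPolynomial.C (1 - qq)) := by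
    simp only [zF, qF, algR_eq, map_add, map_sub, map_one]
    ring
  rw [h1]
  intro h
  have h0 : (MvPolynomial.X none + MvPolynomial.C (1 - qq) : P) = 0 :=
    IsFractionRing.injective P F (by rw [h, map_zero])
  have := congrArg (MvPolynomial.coeff (Finsupp.single none 1)) h0
  have h2 : (0 : Option ℤ →₀ ℕ) ≠ Finsupp.single none 1 := by
    intro hc
    exact one_ne_zero (Finsupp.single_eq_zero.mp hc.symm)
  rw [MvPolynomial.coeff_add, MvPolynomial.coeff_X, MvPolynomial.coeff_C,
    if_neg h2, MvPolynomial.coeff_zero, add_zero] at this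
  exact one_ne_zero ((if_pos rfl).symm.trans this)

lemma lam_ne : lamF ≠ 0 :=
  div_ne_zero num_ne (mul_ne_zero qF_ne zF_ne)

/-- The Lambropoulou function `X` satisfies the HOMFLYPT skein relation
`(1/(√q√λ))·X(ασ_iβ) − (√q√λ)·X(ασ_i⁻¹β) = (√q − 1/√q)·X(αβ)`. -/
theorem X_skein_relation (tr : ∀ m, H m →ₗ[R] F) (htr : IsMarkovTrace tr)
    (e : ∀ m, B m →* Multiplicative ℤ) (he : IsExpSum e)
    (F' : Type) [Field F'] (φ : F →+* F') (sl : F') (hsl : sl ^ 2 = φ lamF)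
    (sq : F') (hsq : sq ^ 2 = φ qF) :
    ∀ (m : ℕ) (i : Fin m) (α β : B m),
      (1 / (sq * sl)) * Xinv tr φ sl e m (α * σ i * β) -
        (sq * sl) * Xinv tr φ sl e m (α * (σ i)⁻¹ * β) =
      (sq - 1 / sq) * Xinv tr φ sl e m (α * β) := by
  intro m i α β
  have hφ : Function.Injective φ := φ.injective
  -- nonvanishing
  have huq : φ qF * φ (algebraMap R F qi) = 1 := by
    rw [← map_mul, qF_mul, map_one]
  have hq0 : φ qF ≠ 0 := left_ne_zero_of_mul_eq_one huq
  have hsq0 : sq ≠ 0 := by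
    intro h
    rw [h] at hsq
    exact hq0 (by rw [← hsq]; ring)
  have hsl0 : sl ≠ 0 := by
    intro h
    rw [h] at hsl
    apply lam_ne (hφ ?_)
    rw [← hsl, map_zero]; ring
  have hu : φ (algebraMap R F qi) = (sq * sq)⁻¹ := by
    field_simp
    rw [hsq]
    rw [mul_comm] at huq
    exact huq
  -- exponent sums
  have hes : e m (σ i) = Multiplicative.ofAdd 1 := (he m).2 i
  have hk1 : Multiplicative.toAdd (e m (α * σ i * β)) =
      Multiplicative.toAdd (e m (α * β)) + 1 := by
    simp only [map_mul, hes, toAdd_mul, toAdd_ofAdd]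
    ring
  have hk2 : Multiplicative.toAdd (e m (α * (σ i)⁻¹ * β)) =
      Multiplicative.toAdd (e m (α * β)) - 1 := by
    simp only [map_mul, map_inv, hes, toAdd_mul, toAdd_inv, toAdd_ofAdd]
    ring
  -- expand Xinv
  rw [Xinv, Xinv, Xinv, hk1, hk2, trace_expand tr φ i α β, hu]
  set k := Multiplicative.toAdd (e m (α * β)) with hk
  set C := (-(1 - φ lamF * φ qF) / (sl * (1 - φ qF))) ^ m with hC
  set A' := φ (tr m (pih m (α * σ i * β))) with hA
  set B' := φ (tr m (pih m (α * β))) with hB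
  rw [zpow_add₀ hsl0, zpow_sub₀ hsl0, zpow_one]
  field_simp
  ring

end MB
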